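/- Let E be a reflexive Banach space, let α : S ↷ A be an inverse semigroup action on a Banach algebra A, let π : A → B(E) be a contractive algebra homomorphism, and let v : S → B(E) be a map with ‖v_t‖ ≤ 1 for all t satisfying: (CR1) v_t π(a) = π(α_t(a)) v_t for all a ∈ I_{t*}, t ∈ S; (CR2) π(a) v_s v_t = π(a) v_{st} for all a ∈ I_{st}, s, t ∈ S; (CR3) π(a) v_e = π(a) for all a ∈ I_e, e ∈ E(S). Then there exists a unique covariant representation (π, ṽ) of α on E (i.e. ṽ : S → B(E) is a contractive semigroup homomorphism satisfying (SCR1) ṽ_t π(a) = π(α_t(a)) ṽ_t for a ∈ I_{t*} and (SCR2) ṽ_t E = closed linear span of π(I_t)E) such that π(a) v_t = π(a) ṽ_t for all a ∈ I_t and t ∈ S. -/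

import Mathlib

set_option autoImplicit false

open Filter Topology

/-- An inverse semigroup: every element `t` has a generalized inverse `sInv t`,
which is the unique `w` with `t * w * t = t` and `w * t * w = w`. -/
def IsInvSemigroup (S : Type*) [Semigroup S] (sInv : S → S) : Prop :=
  (∀ t : S, t * sInv t * t = t) ∧ (∀ t : S, sInv t * t * sInv t = sInv t) ∧
    ∀ t w : S, t * w * t = t → w * t * w = w → w = sInv t

/-- An action of an inverse semigroup `S` (with generalized inverse `sInv`) on a
Banach algebra `A` by partial automorphisms `act t : I (sInv t) → I t` between
closed two-sided ideals, satisfying (PA1) and (PA2). -/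
structure InvSemigroupAction (S : Type*) [Semigroup S] (sInv : S → S)
    (A : Type*) [NonUnitalNormedRing A] [NormedSpace ℂ A] where
  /-- the ideals `I t` -/
  I : S → Submodule ℂ A
  /-- the partial automorphisms; only the values on `I (sInv t)` are relevant -/
  act : S → A → A
  ideal_closed : ∀ t, IsClosed (I t : Set A)
  ideal_mul_left : ∀ t (a : A), ∀ x ∈ I t, a * x ∈ I t
  ideal_mul_right : ∀ t (a : A), ∀ x ∈ I t, x * a ∈ I t
  act_mem : ∀ t, ∀ a ∈ I (sInv t), act t a ∈ I t
  act_surjOn : ∀ t, ∀ b ∈ I t, ∃ a ∈ I (sInv t), act t a = b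
  act_add : ∀ t, ∀ a ∈ I (sInv t), ∀ b ∈ I (sInv t), act t (a + b) = act t a + act t b
  act_smul : ∀ t (c : ℂ), ∀ a ∈ I (sInv t), act t (c • a) = c • act t a
  act_mul : ∀ t, ∀ a ∈ I (sInv t), ∀ b ∈ I (sInv t), act t (a * b) = act t a * act t b
  act_norm : ∀ t, ∀ a ∈ I (sInv t), ‖act t a‖ = ‖a‖
  /-- (PA1): `act s ∘ act t = act (s*t)` as partial maps: domains match ... -/
  comp_dom : ∀ s t (a : A), (a ∈ I (sInv t) ∧ act t a ∈ I (sInv s)) ↔ a ∈ I (sInv (s * t))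
  /-- (PA1): ... and values agree on the common domain. -/
  comp_act : ∀ s t, ∀ a ∈ I (sInv (s * t)), act s (act t a) = act (s * t) a
  /-- (PA2): each ideal has a contractive two-sided approximate unit (as a filter/net). -/
  approx_unit : ∀ t, ∃ l : Filter A, l.NeBot ∧ (∀ᶠ x in l, x ∈ I t ∧ ‖x‖ ≤ 1) ∧
    ∀ a ∈ I t, Tendsto (fun x => x * a) l (𝓝 a) ∧ Tendsto (fun x => a * x) l (𝓝 a)
  /-- (PA2): the union of the ideals over idempotents has dense linear span. -/
  dense_span : Dense (↑(Submodule.span ℂ (⋃ e ∈ {e : S | e * e = e}, (I e : Set A))) : Set A)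

/-- A covariant representation of an inverse semigroup action on a Banach space `E`:
`π` is a contractive algebra homomorphism `A → B(E)`, `v` is a contractive semigroup
homomorphism satisfying (SCR1) and (SCR2). -/
structure IsCovariantRep {S : Type*} [Semigroup S] {sInv : S → S}
    {A : Type*} [NonUnitalNormedRing A] [NormedSpace ℂ A]
    {E : Type*} [NormedAddCommGroup E] [NormedSpace ℂ E]
    (θ : InvSemigroupAction S sInv A)
    (π : A → E →L[ℂ] E) (v : S → E →L[ℂ] E) : Prop where
  π_norm : ∀ a, ‖π a‖ ≤ ‖a‖
  π_add : ∀ a b, π (a + b) = π a + π b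
  π_smul : ∀ (c : ℂ) (a : A), π (c • a) = c • π a
  π_mul : ∀ a b, π (a * b) = π a * π b
  v_norm : ∀ t, ‖v t‖ ≤ 1
  v_mul : ∀ s t, v (s * t) = v s * v t
  scr1 : ∀ t, ∀ a ∈ θ.I (sInv t), v t * π a = π (θ.act t a) * v t
  scr2 : ∀ t, Set.range (v t) =
    closure (↑(Submodule.span ℂ {x : E | ∃ a ∈ θ.I t, ∃ ξ : E, π a ξ = x}) : Set E)

namespace AuxIS
variable {S : Type*} [Semigroup S] {sInv : S → S} (hS : IsInvSemigroup S sInv)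
include hS

theorem sInv_sInv (t : S) : sInv (sInv t) = t :=
  (hS.2.2 (sInv t) t (hS.2.1 t) (hS.1 t)).symm

theorem sInv_idem {e : S} (he : e * e = e) : sInv e = e :=
  (hS.2.2 e e (by rw [he, he]) (by rw [he, he])).symm

theorem idem_mul_sInv (t : S) : (t * sInv t) * (t * sInv t) = t * sInv t := by
  have h := hS.1 t
  calc (t * sInv t) * (t * sInv t) = (t * sInv t * t) * sInv t := by
        simp only [mul_assoc]
    _ = t * sInv t := by rw [h]

theorem idem_sInv_mul (t : S) : (sInv t * t) * (sInv t * t) = sInv t * t := by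
  have h := hS.2.1 t
  calc (sInv t * t) * (sInv t * t) = (sInv t * t * sInv t) * t := by
        simp only [mul_assoc]
    _ = sInv t * t := by rw [h]

theorem idem_mul {e f : S} (he : e * e = e) (hf : f * f = f) :
    (e * f) * (e * f) = e * f := by
  set w := sInv (e * f) with hw
  have he' : ∀ x : S, e * (e * x) = e * x := fun x => by rw [← mul_assoc, he]
  have hf' : ∀ x : S, f * (f * x) = f * x := fun x => by rw [← mul_assoc, hf]
  have h1 : e * (f * (w * (e * f))) = e * f := by
    have := hS.1 (e * f); simpa only [mul_assoc] using this
  have h2 : w * (e * (f * w)) = w := by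
    have := hS.2.1 (e * f); simpa only [mul_assoc] using this
  have hA1 : (e * f) * (f * w * e) * (e * f) = e * f := by
    simp only [mul_assoc, he', hf']; exact h1
  have hA2 : (f * w * e) * (e * f) * (f * w * e) = f * w * e := by
    simp only [mul_assoc, he', hf']
    calc f * (w * (e * (f * (w * e))))
        = f * ((w * (e * (f * w))) * e) := by simp only [mul_assoc]
      _ = f * (w * e) := by rw [h2]
  have hwfe : f * w * e = w := hS.2.2 (e * f) (f * w * e) hA1 hA2
  have hXX : (f * w * e) * (f * w * e) = f * w * e := by
    calc (f * w * e) * (f * w * e) = f * (w * (e * (f * (w * e)))) := by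
          simp only [mul_assoc]
      _ = f * ((w * (e * (f * w))) * e) := by simp only [mul_assoc]
      _ = f * (w * e) := by rw [h2]
      _ = f * w * e := by rw [mul_assoc]
  have hww : w * w = w := by rw [← hwfe]; exact hXX
  -- e*f is a generalized inverse of w, and w is idempotent hence self-inverse
  have hef : e * f = sInv w :=
    hS.2.2 w (e * f) (by simpa only [mul_assoc] using h2) (hS.1 (e * f))
  rw [sInv_idem hS hww] at hef
  rw [hef]; exact hww

theorem idem_comm {e f : S} (he : e * e = e) (hf : f * f = f) :
    e * f = f * e := by
  have hef := idem_mul hS he hf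
  have hfe := idem_mul hS hf he
  have he' : ∀ x : S, e * (e * x) = e * x := fun x => by rw [← mul_assoc, he]
  have hf' : ∀ x : S, f * (f * x) = f * x := fun x => by rw [← mul_assoc, hf]
  -- f*e is a generalized inverse of e*f
  have h1 : (e * f) * (f * e) * (e * f) = e * f := by
    simp only [mul_assoc, he', hf']
    simpa only [mul_assoc] using hef
  have h2 : (f * e) * (e * f) * (f * e) = f * e := by
    simp only [mul_assoc, he', hf']
    simpa only [mul_assoc] using hfe
  have := hS.2.2 (e * f) (f * e) h1 h2
  rw [this, sInv_idem hS hef]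

theorem sInv_mul (s t : S) : sInv (s * t) = sInv t * sInv s := by
  have hc := idem_comm hS (idem_sInv_mul hS s) (idem_mul_sInv hS t)
  -- hc : (sInv s * s) * (t * sInv t) = (t * sInv t) * (sInv s * s)
  refine (hS.2.2 (s * t) (sInv t * sInv s) ?_ ?_).symm
  · calc (s * t) * (sInv t * sInv s) * (s * t)
        = s * ((t * sInv t) * ((sInv s * s) * t)) := by simp only [mul_assoc]
      _ = s * ((t * sInv t) * (sInv s * s) * t) := by simp only [mul_assoc]
      _ = s * ((sInv s * s) * (t * sInv t) * t) := by rw [← hc]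
      _ = (s * (sInv s * s)) * ((t * sInv t) * t) := by simp only [mul_assoc]
      _ = s * t := by
          rw [← mul_assoc s (sInv s) s, hS.1 s, hS.1 t]
  · calc (sInv t * sInv s) * (s * t) * (sInv t * sInv s)
        = sInv t * ((sInv s * s) * ((t * sInv t) * sInv s)) := by simp only [mul_assoc]
      _ = sInv t * ((sInv s * s) * (t * sInv t) * sInv s) := by simp only [mul_assoc]
      _ = sInv t * ((t * sInv t) * (sInv s * s) * sInv s) := by rw [hc]
      _ = (sInv t * (t * sInv t)) * ((sInv s * s) * sInv s) := by simp only [mul_assoc]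
      _ = sInv t * sInv s := by
          rw [hS.2.1 s, ← mul_assoc (sInv t) t (sInv t), hS.2.1 t]
end AuxIS

namespace AuxAct
set_option linter.unusedSectionVars false
open AuxIS
variable {S A : Type*} [Semigroup S] [NonUnitalNormedRing A] [NormedSpace ℂ A]
  {sInv : S → S} (hS : IsInvSemigroup S sInv) (θ : InvSemigroupAction S sInv A)
include hS

theorem act_sub (t : S) {a b : A} (ha : a ∈ θ.I (sInv t)) (hb : b ∈ θ.I (sInv t)) :
    θ.act t (a - b) = θ.act t a - θ.act t b := by
  have hnb : -b = (-1 : ℂ) • b := by simp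
  have hmem : -b ∈ θ.I (sInv t) := neg_mem hb
  rw [sub_eq_add_neg, θ.act_add t a ha (-b) hmem, hnb, θ.act_smul t (-1) b hb]
  simp [sub_eq_add_neg]

theorem act_norm_sub (t : S) {a b : A} (ha : a ∈ θ.I (sInv t)) (hb : b ∈ θ.I (sInv t)) :
    ‖θ.act t a - θ.act t b‖ = ‖a - b‖ := by
  rw [← act_sub hS θ t ha hb]; exact θ.act_norm t _ (sub_mem ha hb)

theorem sInv_I_eq {e : S} (he : e * e = e) : θ.I (sInv e) = θ.I e := by
  rw [sInv_idem hS he]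

theorem act_idem {e : S} (he : e * e = e) {a : A} (ha : a ∈ θ.I e) :
    θ.act e a = a := by
  have hse : sInv e = e := sInv_idem hS he
  have ha' : a ∈ θ.I (sInv e) := by rw [hse]; exact ha
  have h1 : θ.act e (θ.act e a) = θ.act e a := by
    have hmem : a ∈ θ.I (sInv (e * e)) := by rw [he, hse]; exact ha
    rw [θ.comp_act e e a hmem, he]
  have h2 : θ.act e a ∈ θ.I (sInv e) := by rw [hse]; exact θ.act_mem e a ha'
  have := act_norm_sub hS θ e h2 ha'
  rw [h1, sub_self, norm_zero] at this
  exact sub_eq_zero.mp (norm_eq_zero.mp this.symm)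

theorem I_eq_mul_sInv (t : S) : θ.I t = θ.I (t * sInv t) := by
  ext a
  have h := θ.comp_dom t (sInv t) a
  rw [sInv_sInv hS, sInv_idem hS (idem_mul_sInv hS t)] at h
  constructor
  · intro ha
    exact h.mp ⟨ha, θ.act_mem (sInv t) a (by rw [sInv_sInv hS]; exact ha)⟩
  · intro ha
    exact (h.mpr ha).1

theorem I_mul_subset (s t : S) : θ.I (s * t) ≤ θ.I s := by
  intro b hb
  obtain ⟨a, ha, rfl⟩ := θ.act_surjOn (s * t) b hb
  rw [← θ.comp_act s t a ha]
  exact θ.act_mem s _ ((θ.comp_dom s t a).mpr ha).2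

theorem I_sInv_mul_subset (s t : S) : θ.I (sInv (s * t)) ≤ θ.I (sInv t) := by
  rw [sInv_mul hS s t]; exact I_mul_subset hS θ (sInv t) (sInv s)

theorem mem_sInv_iff_mul (t : S) : θ.I (sInv t) = θ.I (sInv t * t) := by
  have := I_eq_mul_sInv hS θ (sInv t)
  rwa [sInv_sInv hS] at this

theorem act_act_sInv (t : S) {a : A} (ha : a ∈ θ.I (sInv t)) :
    θ.act (sInv t) (θ.act t a) = a := by
  have hmem : a ∈ θ.I (sInv (sInv t * t)) := by
    rw [sInv_idem hS (idem_sInv_mul hS t), ← mem_sInv_iff_mul hS θ t]; exact ha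
  rw [θ.comp_act (sInv t) t a hmem]
  exact act_idem hS θ (idem_sInv_mul hS t) (by rw [← mem_sInv_iff_mul hS θ t]; exact ha)

theorem act_sInv_act (t : S) {b : A} (hb : b ∈ θ.I t) :
    θ.act t (θ.act (sInv t) b) = b := by
  have := act_act_sInv hS θ (sInv t) (a := b) (by rw [sInv_sInv hS]; exact hb)
  rwa [sInv_sInv hS] at this

theorem act_sInv_mem (t : S) {b : A} (hb : b ∈ θ.I t) :
    θ.act (sInv t) b ∈ θ.I (sInv t) :=
  θ.act_mem (sInv t) b (by rw [sInv_sInv hS]; exact hb)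

theorem act_mem_mul (s t : S) {c : A} (hc : c ∈ θ.I (sInv s)) (hct : c ∈ θ.I t) :
    θ.act s c ∈ θ.I (s * t) := by
  set f := t * sInv t with hf
  have hfe : f * f = f := idem_mul_sInv hS t
  have hcf : c ∈ θ.I f := by rw [← I_eq_mul_sInv hS θ t]; exact hct
  have hactf : θ.act f c = c := act_idem hS θ hfe hcf
  have hdom : c ∈ θ.I (sInv (s * f)) := by
    refine (θ.comp_dom s f c).mp ⟨?_, ?_⟩
    · rw [sInv_idem hS hfe]; exact hcf
    · rw [hactf]; exact hc
  have : θ.act s c = θ.act (s * f) c := by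
    conv_lhs => rw [← hactf]
    exact θ.comp_act s f c hdom
  rw [this]
  have hmem := θ.act_mem (s * f) c hdom
  have hsub : θ.I (s * f) ≤ θ.I (s * t) := by
    have heq : s * f = (s * t) * sInv t := by rw [hf, ← mul_assoc]
    rw [heq]; exact I_mul_subset hS θ (s * t) (sInv t)
  exact hsub hmem
end AuxAct

open AuxIS AuxAct

/-- on a reflexive Banach space `E`, every pair `(π, v)` satisfying
(CR1)–(CR3) (with `v` contractive) normalizes uniquely: there is a unique covariant
representation `(π, ṽ)` on `E` with `π(a) v_t = π(a) ṽ_t` for all `a ∈ I_t`, `t ∈ S`. -/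
theorem reflexive_normalization_exists_unique
    {S A E : Type*} [Semigroup S] [NonUnitalNormedRing A] [NormedSpace ℂ A]
    [NormedAddCommGroup E] [NormedSpace ℂ E] [CompleteSpace E]
    (hrefl : Function.Surjective ⇑(NormedSpace.inclusionInDoubleDual ℂ E))
    (sInv : S → S) (hS : IsInvSemigroup S sInv)
    (θ : InvSemigroupAction S sInv A)
    (π : A → E →L[ℂ] E) (v : S → E →L[ℂ] E)
    (hπ_norm : ∀ a, ‖π a‖ ≤ ‖a‖)
    (hπ_add : ∀ a b, π (a + b) = π a + π b)
    (hπ_smul : ∀ (c : ℂ) (a : A), π (c • a) = c • π a)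
    (hπ_mul : ∀ a b, π (a * b) = π a * π b)
    (hv_norm : ∀ t, ‖v t‖ ≤ 1)
    (hcr1 : ∀ t, ∀ a ∈ θ.I (sInv t), v t * π a = π (θ.act t a) * v t)
    (hcr2 : ∀ s t, ∀ a ∈ θ.I (s * t), π a * (v s * v t) = π a * v (s * t))
    (hcr3 : ∀ e : S, e * e = e → ∀ a ∈ θ.I e, π a * v e = π a) :
    ∃! w : S → E →L[ℂ] E,
      IsCovariantRep θ π w ∧ ∀ t, ∀ a ∈ θ.I t, π a * v t = π a * w t := by
    classical
  -- basic facts about π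
  have hπ_sub : ∀ a b : A, π (a - b) = π a - π b := by
    intro a b
    have : a - b = a + (-1 : ℂ) • b := by simp [sub_eq_add_neg]
    rw [this, hπ_add, hπ_smul]; simp [sub_eq_add_neg]
  have hπξ : ∀ (a : A) (ξ : E), ‖π a ξ‖ ≤ ‖a‖ * ‖ξ‖ := fun a ξ =>
    le_trans ((π a).le_opNorm ξ) (by gcongr; exact hπ_norm a)
  have hπcont : ∀ ξ : E, Continuous fun a : A => π a ξ := by
    intro ξ
    refine (LipschitzWith.of_dist_le_mul (K := ‖ξ‖₊) ?_).continuous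
    intro a b
    have h1 : dist (π a ξ) (π b ξ) = ‖π (a - b) ξ‖ := by
      rw [dist_eq_norm, ← ContinuousLinearMap.sub_apply, ← hπ_sub]
    rw [h1, dist_eq_norm]
    calc ‖π (a - b) ξ‖ ≤ ‖a - b‖ * ‖ξ‖ := hπξ _ _
      _ = (‖ξ‖₊ : ℝ) * ‖a - b‖ := by rw [coe_nnnorm, mul_comm]
  -- dual separation
  have hsep : ∀ x y : E, (∀ f : E →L[ℂ] ℂ, f x = f y) → x = y := fun x y h =>
    (NormedSpace.eq_iff_forall_dual_eq ℂ).mpr h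
  -- separation from a closed submodule
  have hsepM : ∀ M : Submodule ℂ E, IsClosed (M : Set E) → ∀ x : E, x ∉ M →
      ∃ f : E →L[ℂ] ℂ, (∀ m ∈ M, f m = 0) ∧ f x ≠ 0 := by
    intro M hM x hx
    haveI : IsClosed (M : Set E) := hM
    set q : E →ₗ[ℂ] E ⧸ M := M.mkQ
    have hqle : ∀ m : E, ‖q m‖ ≤ 1 * ‖m‖ := fun m => by
      rw [one_mul]; exact Submodule.Quotient.norm_mk_le M m
    set Q : E →L[ℂ] E ⧸ M := LinearMap.mkContinuous q 1 hqle
    have hQx : Q x ≠ 0 := by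
      simpa [Q, q, Submodule.Quotient.mk_eq_zero] using hx
    obtain ⟨g, -, hgx⟩ := exists_dual_vector ℂ (Q x) (norm_ne_zero_iff.mpr hQx)
    refine ⟨g.comp Q, fun m hm => ?_, ?_⟩
    · have : Q m = 0 := by simpa [Q, q, Submodule.Quotient.mk_eq_zero] using hm
      simp [ContinuousLinearMap.comp_apply, this]
    · simp only [ContinuousLinearMap.comp_apply, hgx]
      intro h
      rw [RCLike.ofReal_eq_zero] at h
      exact hQx (norm_eq_zero.mp h)
  -- approximate units and ultrafilters
  choose l hlne hlev hlapp using θ.approx_unit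
  have hU : ∀ r : S, ∃ U : Ultrafilter A, (U : Filter A) ≤ l r := fun r =>
    haveI := hlne r; ⟨Ultrafilter.of (l r), Ultrafilter.of_le _⟩
  choose U hUle using hU
  have hUev : ∀ r, ∀ᶠ u in (U r : Filter A), u ∈ θ.I r ∧ ‖u‖ ≤ 1 := fun r =>
    (hlev r).filter_mono (hUle r)
  -- existence of weak limits along the ultrafilters, via reflexivity
  have hweak : ∀ (r : S) (g : A → E) (C : ℝ), 0 ≤ C →
      (∀ᶠ u in (U r : Filter A), ‖g u‖ ≤ C) →
      ∃ y : E, (∀ f : E →L[ℂ] ℂ, Tendsto (fun u => f (g u)) (U r) (𝓝 (f y))) ∧ ‖y‖ ≤ C := by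
    intro r g C hC0 hbdd
    have hex : ∀ f : E →L[ℂ] ℂ, ∃ c : ℂ, Tendsto (fun u => f (g u)) (U r) (𝓝 c) := by
      intro f
      have hcmp : IsCompact (Metric.closedBall (0 : ℂ) (‖f‖ * C)) :=
        isCompact_closedBall _ _
      have hle : (Ultrafilter.map (fun u => f (g u)) (U r) : Filter ℂ) ≤
          Filter.principal (Metric.closedBall 0 (‖f‖ * C)) := by
        rw [Filter.le_principal_iff]
        rw [Ultrafilter.coe_map, Filter.mem_map]
        filter_upwards [hbdd] with u hu
        simp only [Set.mem_preimage, Metric.mem_closedBall, dist_zero_right]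
        calc ‖f (g u)‖ ≤ ‖f‖ * ‖g u‖ := f.le_opNorm _
          _ ≤ ‖f‖ * C := by gcongr
      obtain ⟨c, -, hc⟩ := hcmp.ultrafilter_le_nhds _ hle
      exact ⟨c, hc⟩
    choose c hc using hex
    have hcadd : ∀ f₁ f₂ : E →L[ℂ] ℂ, c (f₁ + f₂) = c f₁ + c f₂ := fun f₁ f₂ =>
      tendsto_nhds_unique (hc (f₁ + f₂))
        (by simpa only [ContinuousLinearMap.add_apply] using (hc f₁).add (hc f₂))
    have hcsmul : ∀ (k : ℂ) (f : E →L[ℂ] ℂ), c (k • f) = k • c f := fun k f =>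
      tendsto_nhds_unique (hc (k • f))
        (by simpa only [ContinuousLinearMap.smul_apply] using (hc f).const_smul k)
    have hcb : ∀ f : E →L[ℂ] ℂ, ‖c f‖ ≤ C * ‖f‖ := by
      intro f
      refine le_of_tendsto (hc f).norm ?_
      filter_upwards [hbdd] with u hu
      calc ‖f (g u)‖ ≤ ‖f‖ * ‖g u‖ := f.le_opNorm _
        _ ≤ ‖f‖ * C := by gcongr
        _ = C * ‖f‖ := mul_comm _ _
    set F : StrongDual ℂ E →L[ℂ] ℂ :=
      LinearMap.mkContinuous
        { toFun := c, map_add' := hcadd, map_smul' := fun k f => hcsmul k f } C hcb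
    obtain ⟨y, hy⟩ := hrefl F
    have hyf : ∀ f : E →L[ℂ] ℂ, f y = c f := by
      intro f
      have := congrArg (fun Φ : StrongDual ℂ (StrongDual ℂ E) => Φ f) hy
      simpa [NormedSpace.dual_def, F, LinearMap.mkContinuous] using this
    refine ⟨y, fun f => (hyf f) ▸ hc f, ?_⟩
    refine NormedSpace.norm_le_dual_bound ℂ y hC0 fun f => ?_
    rw [hyf f]; exact hcb f
    -- the weak-limit "projection" P r
  have hPex : ∀ (r : S) (ξ : E), ∃ y : E,
      (∀ f : E →L[ℂ] ℂ, Tendsto (fun u => f (π u ξ)) (U r) (𝓝 (f y))) ∧ ‖y‖ ≤ ‖ξ‖ := by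
    intro r ξ
    refine hweak r (fun u => π u ξ) ‖ξ‖ (norm_nonneg ξ) ?_
    filter_upwards [hUev r] with u hu
    calc ‖π u ξ‖ ≤ ‖u‖ * ‖ξ‖ := hπξ _ _
      _ ≤ 1 * ‖ξ‖ := by gcongr; exact hu.2
      _ = ‖ξ‖ := one_mul _
  choose P hP hPnorm using hPex
  -- uniqueness of weak limits
  have huniq : ∀ (r : S) (g : A → E) (y z : E),
      (∀ f : E →L[ℂ] ℂ, Tendsto (fun u => f (g u)) (U r) (𝓝 (f y))) →
      Tendsto g (U r) (𝓝 z) → y = z := fun r g y z hy hz =>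
    hsep y z fun f => tendsto_nhds_unique (hy f) ((f.continuous.tendsto z).comp hz)
  -- weak limits of elements of a closed submodule stay in it
  have hmemlim : ∀ (r : S) (g : A → E) (y : E) (M : Submodule ℂ E), IsClosed (M : Set E) →
      (∀ f : E →L[ℂ] ℂ, Tendsto (fun u => f (g u)) (U r) (𝓝 (f y))) →
      (∀ᶠ u in (U r : Filter A), g u ∈ M) → y ∈ M := by
    intro r g y M hM hy hev
    by_contra hyM
    obtain ⟨f, hf0, hfy⟩ := hsepM M hM y hyM
    have h0 : Tendsto (fun u => f (g u)) (U r) (𝓝 0) := by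
      have heq : (fun u => f (g u)) =ᶠ[(U r : Filter A)] fun _ => 0 := by
        filter_upwards [hev] with u hu; exact hf0 _ hu
      exact Tendsto.congr' heq.symm tendsto_const_nhds
    exact hfy (tendsto_nhds_unique (hy f) h0)
  -- the normalized operators W t = P t ∘ v t
  have hWex : ∀ t : S, ∃ w : E →L[ℂ] E, (∀ ξ, w ξ = P t (v t ξ)) ∧ ‖w‖ ≤ 1 := by
    intro t
    have hadd : ∀ ξ η : E, P t (v t (ξ + η)) = P t (v t ξ) + P t (v t η) := by
      intro ξ η
      refine hsep _ _ fun f => ?_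
      refine tendsto_nhds_unique (hP t (v t (ξ + η)) f) ?_
      have h2 := (hP t (v t ξ) f).add (hP t (v t η) f)
      rw [map_add f]
      refine Tendsto.congr (fun u => ?_) h2
      rw [← map_add f, ← map_add (π u), ← map_add (v t)]
    have hsmul : ∀ (k : ℂ) (ξ : E), P t (v t (k • ξ)) = k • P t (v t ξ) := by
      intro k ξ
      refine hsep _ _ fun f => ?_
      refine tendsto_nhds_unique (hP t (v t (k • ξ)) f) ?_
      have h2 := (hP t (v t ξ) f).const_smul k
      rw [map_smul f]
      refine Tendsto.congr (fun u => ?_) h2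
      rw [← map_smul f, ← map_smul (π u), ← map_smul (v t)]
    refine ⟨LinearMap.mkContinuous
      { toFun := fun ξ => P t (v t ξ), map_add' := hadd, map_smul' := hsmul } 1
      (fun ξ => ?_), fun ξ => rfl, ?_⟩
    · rw [one_mul]
      calc ‖P t (v t ξ)‖ ≤ ‖v t ξ‖ := hPnorm t (v t ξ)
        _ ≤ ‖v t‖ * ‖ξ‖ := (v t).le_opNorm ξ
        _ ≤ 1 * ‖ξ‖ := by gcongr; exact hv_norm t
        _ = ‖ξ‖ := one_mul _
    · exact LinearMap.mkContinuous_norm_le _ zero_le_one _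
  choose W hWapp hWnorm using hWex
  have hWchar : ∀ (t : S) (ξ : E) (f : E →L[ℂ] ℂ),
      Tendsto (fun u => f (π u (v t ξ))) (U t) (𝓝 (f (W t ξ))) := fun t ξ f => by
    rw [hWapp t ξ]; exact hP t (v t ξ) f
  -- the essential subspaces
  set M : S → Submodule ℂ E := fun r =>
    (Submodule.span ℂ {x : E | ∃ a ∈ θ.I r, ∃ ξ : E, π a ξ = x}).topologicalClosure
    with hM_def
  have hMclosed : ∀ r, IsClosed ((M r : Set E)) := fun r =>
    Submodule.isClosed_topologicalClosure _
  have hMgen : ∀ (r : S) (a : A), a ∈ θ.I r → ∀ ξ : E, π a ξ ∈ M r := by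
    intro r a ha ξ
    exact Submodule.le_topologicalClosure _ (Submodule.subset_span ⟨a, ha, ξ, rfl⟩)
  -- (F1) π a ∘ P r = π a for a ∈ I r
  have hπP : ∀ r : S, ∀ a ∈ θ.I r, ∀ ξ : E, π a (P r ξ) = π a ξ := by
    intro r a ha ξ
    refine hsep _ _ fun f => ?_
    have h1 : Tendsto (fun u => f (π a (π u ξ))) (U r) (𝓝 (f (π a (P r ξ)))) :=
      hP r ξ (f.comp (π a))
    have h2 : Tendsto (fun u : A => π (a * u) ξ) (U r) (𝓝 (π a ξ)) := by
      have hmul : Tendsto (fun u : A => a * u) (U r) (𝓝 a) :=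
        ((hlapp r a ha).2).mono_left (hUle r)
      exact ((hπcont ξ).tendsto a).comp hmul
    have h2' : Tendsto (fun u => f (π a (π u ξ))) (U r) (𝓝 (f (π a ξ))) := by
      refine ((f.continuous.tendsto _).comp h2).congr fun u => ?_
      simp only [Function.comp_apply]; rw [hπ_mul]; rfl
    exact tendsto_nhds_unique h1 h2'
  -- (F2) P r ∘ π b = π b for b ∈ I r
  have hPπ : ∀ r : S, ∀ b ∈ θ.I r, ∀ ξ : E, P r (π b ξ) = π b ξ := by
    intro r b hb ξ
    refine huniq r _ _ _ (hP r (π b ξ)) ?_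
    have hmul : Tendsto (fun u : A => u * b) (U r) (𝓝 b) :=
      ((hlapp r b hb).1).mono_left (hUle r)
    refine (((hπcont ξ).tendsto b).comp hmul).congr fun u => ?_
    simp only [Function.comp_apply]; rw [hπ_mul]; rfl
  -- (F3) P r ξ ∈ M r
  have hPmem : ∀ (r : S) (ξ : E), P r ξ ∈ M r := by
    intro r ξ
    refine hmemlim r _ _ (M r) (hMclosed r) (hP r ξ) ?_
    filter_upwards [hUev r] with u hu
    exact hMgen r u hu.1 ξ
  -- (F5) approximate identity on M r, in norm
  have hMapprox : ∀ r : S, ∀ ζ ∈ M r, Tendsto (fun u => π u ζ) (l r) (𝓝 ζ) := by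
    intro r ζ hζ
    have hspan : ∀ z ∈ Submodule.span ℂ {x : E | ∃ a ∈ θ.I r, ∃ ξ : E, π a ξ = x},
        Tendsto (fun u => π u z) (l r) (𝓝 z) := by
      intro z hz
      induction hz using Submodule.span_induction with
      | mem x hx =>
        obtain ⟨a, ha, ξ, rfl⟩ := hx
        refine (((hπcont ξ).tendsto a).comp ((hlapp r a ha).1)).congr fun u => ?_
        simp only [Function.comp_apply]; rw [hπ_mul]; rfl
      | zero => simp only [map_zero]; exact tendsto_const_nhds
      | add x y _ _ hx hy =>
        refine (hx.add hy).congr fun u => ?_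
        rw [← map_add (π u)]
      | smul k x _ hx =>
        refine (hx.const_smul k).congr fun u => ?_
        rw [← map_smul (π u)]
    rw [Metric.tendsto_nhds]
    intro ε hε
    have hζ' : ζ ∈ closure (Submodule.span ℂ
        {x : E | ∃ a ∈ θ.I r, ∃ ξ : E, π a ξ = x} : Set E) := hζ
    obtain ⟨z, hz, hzζ⟩ := Metric.mem_closure_iff.mp hζ' (ε / 3) (by linarith)
    have hz' := hspan z hz
    rw [Metric.tendsto_nhds] at hz'
    filter_upwards [hlev r, hz' (ε / 3) (by linarith)] with u hu huz
    have h1 : ‖π u ζ - π u z‖ ≤ ‖ζ - z‖ := by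
      rw [← map_sub (π u)]
      calc ‖π u (ζ - z)‖ ≤ ‖u‖ * ‖ζ - z‖ := hπξ _ _
        _ ≤ 1 * ‖ζ - z‖ := by gcongr; exact hu.2
        _ = ‖ζ - z‖ := one_mul _
    have hd : dist ζ z < ε / 3 := hzζ
    rw [dist_eq_norm] at hd ⊢
    rw [dist_eq_norm] at huz
    have key : ‖π u ζ - ζ‖ ≤ ‖π u ζ - π u z‖ + ‖π u z - z‖ + ‖z - ζ‖ := by
      have hdec : π u ζ - ζ = (π u ζ - π u z) + (π u z - z) + (z - ζ) := by abel
      rw [hdec]; exact norm_add₃_le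
    have h2 : ‖z - ζ‖ < ε / 3 := by rw [norm_sub_rev]; exact hd
    linarith
    -- (F6) vectors in M r are determined by the coefficients π u, u ∈ I r
  have hUniqVec : ∀ (r : S) (X Y : E), X ∈ M r → Y ∈ M r →
      (∀ u ∈ θ.I r, π u X = π u Y) → X = Y := by
    intro r X Y hX hY h
    have h1 : Tendsto (fun u => π u X) (l r) (𝓝 X) := hMapprox r X hX
    have h2 : Tendsto (fun u => π u X) (l r) (𝓝 Y) := by
      refine (hMapprox r Y hY).congr' ?_
      filter_upwards [hlev r] with u hu
      exact (h u hu.1).symm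
    exact tendsto_nhds_unique h1 h2
  -- (G1) moving coefficients across v
  have hπv : ∀ s' : S, ∀ m ∈ θ.I s', ∀ ξ : E,
      π m (v s' ξ) = v s' (π (θ.act (sInv s') m) ξ) := by
    intro s' m hm ξ
    have h := hcr1 s' (θ.act (sInv s') m) (act_sInv_mem hS θ s' hm)
    rw [act_sInv_act hS θ s' hm] at h
    exact (ContinuousLinearMap.ext_iff.mp h ξ).symm
  -- (G2) the key coefficient computation
  have hkey : ∀ (s t : S) (u' u : A), u' ∈ θ.I s → u ∈ θ.I t → ∀ η : E,
      π u' (v s (π u η)) = π (θ.act s (θ.act (sInv s) u' * u)) (v s η) ∧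
        θ.act s (θ.act (sInv s) u' * u) ∈ θ.I (s * t) := by
    intro s t u' u hu' hu η
    set b := θ.act (sInv s) u' with hb
    have hbmem : b ∈ θ.I (sInv s) := act_sInv_mem hS θ s hu'
    have hbu : b * u ∈ θ.I (sInv s) := θ.ideal_mul_right (sInv s) u b hbmem
    have hbut : b * u ∈ θ.I t := θ.ideal_mul_left t b u hu
    constructor
    · rw [hπv s u' hu' (π u η)]
      have hmul : π b (π u η) = π (b * u) η := by rw [hπ_mul]; rfl
      rw [hmul]
      exact ContinuousLinearMap.ext_iff.mp (hcr1 s (b * u) hbu) η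
    · exact act_mem_mul hS θ s t hbu hbut
  -- (H1) compatibility
  have hcompat : ∀ t : S, ∀ a ∈ θ.I t, π a * v t = π a * W t := by
    intro t a ha
    ext ξ
    show π a (v t ξ) = π a (W t ξ)
    rw [hWapp, hπP t a ha]
  -- (H2) SCR1
  have hscr1 : ∀ t : S, ∀ a ∈ θ.I (sInv t), W t * π a = π (θ.act t a) * W t := by
    intro t a ha
    have hact : θ.act t a ∈ θ.I t := θ.act_mem t a ha
    ext ξ
    show W t (π a ξ) = π (θ.act t a) (W t ξ)
    rw [hWapp, hWapp]
    have h1 : v t (π a ξ) = π (θ.act t a) (v t ξ) :=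
      ContinuousLinearMap.ext_iff.mp (hcr1 t a ha) ξ
    rw [h1, hPπ t _ hact, hπP t _ hact]
  -- (H3) range of W t lies in M t
  have hWmem : ∀ (t : S) (ξ : E), W t ξ ∈ M t := fun t ξ =>
    (hWapp t ξ) ▸ hPmem t (v t ξ)
  -- (H4) on idempotents W is the projection P
  have hWidem : ∀ e : S, e * e = e → ∀ ξ : E, W e ξ = P e ξ := by
    intro e he ξ
    refine hsep _ _ fun f => ?_
    have h1 := hWchar e ξ f
    have h2 := hP e ξ f
    have heq : (fun u => f (π u (v e ξ))) =ᶠ[(U e : Filter A)] fun u => f (π u ξ) := by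
      filter_upwards [hUev e] with u hu
      have h3 := ContinuousLinearMap.ext_iff.mp (hcr3 e he u hu.1) ξ
      exact congrArg f h3
    exact tendsto_nhds_unique h1 (h2.congr' heq.symm)
  have hPid : ∀ r : S, ∀ ζ ∈ M r, P r ζ = ζ := fun r ζ hζ =>
    huniq r _ _ _ (hP r ζ) ((hMapprox r ζ hζ).mono_left (hUle r))
  -- (H5)
  have hMeq : ∀ t : S, M t = M (t * sInv t) := by
    intro t
    show (Submodule.span ℂ {x : E | ∃ a ∈ θ.I t, ∃ ξ : E, π a ξ = x}).topologicalClosure =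
      (Submodule.span ℂ {x : E | ∃ a ∈ θ.I (t * sInv t), ∃ ξ : E, π a ξ = x}).topologicalClosure
    rw [← I_eq_mul_sInv hS θ t]
  have hMsub : ∀ s t : S, M (s * t) ≤ M s := by
    intro s t
    refine Submodule.topologicalClosure_mono (Submodule.span_mono ?_)
    rintro x ⟨a, ha, ξ, rfl⟩
    exact ⟨a, I_mul_subset hS θ s t ha, ξ, rfl⟩
    -- (H6) multiplicativity of W
  have hWmul : ∀ s t : S, W (s * t) = W s * W t := by
    intro s t
    ext ξ
    show W (s * t) ξ = W s (W t ξ)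
    -- X := W s (W t ξ) lies in M (s * t)
    have hXmem : W s (W t ξ) ∈ M (s * t) := by
      rw [hWapp s (W t ξ)]
      refine hmemlim s _ _ (M (s * t)) (hMclosed _) (hP s (v s (W t ξ))) ?_
      filter_upwards [hUev s] with u' hu'
      have hchar : ∀ f : E →L[ℂ] ℂ,
          Tendsto (fun u => f (π u' (v s (π u (v t ξ))))) (U t)
            (𝓝 (f (π u' (v s (W t ξ))))) := fun f =>
        hWchar t ξ (f.comp ((π u').comp (v s)))
      refine hmemlim t _ _ (M (s * t)) (hMclosed _) hchar ?_
      filter_upwards [hUev t] with u hu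
      obtain ⟨heq, hmem⟩ := hkey s t u' u hu'.1 hu.1 (v t ξ)
      rw [heq]
      exact hMgen _ _ hmem (v s (v t ξ))
    have hYmem : W (s * t) ξ ∈ M (s * t) := hWmem _ _
    refine hUniqVec (s * t) _ _ hYmem hXmem ?_
    intro m hm
    have hR : π m (W (s * t) ξ) = π m (v (s * t) ξ) := by
      rw [hWapp, hπP (s * t) m hm]
    have hmS : m ∈ θ.I s := I_mul_subset hS θ s t hm
    have hL1 : π m (W s (W t ξ)) = π m (v s (W t ξ)) := by
      rw [hWapp s (W t ξ), hπP s m hmS]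
    rw [hR, hL1]
    -- notation
    set n' := θ.act (sInv (s * t)) m with hn'
    have hn'mem : n' ∈ θ.I (sInv (s * t)) := act_sInv_mem hS θ (s * t) hm
    have hn't : n' ∈ θ.I (sInv t) := I_sInv_mul_subset hS θ s t hn'mem
    have hactn' : θ.act t n' ∈ θ.I t := θ.act_mem t n' hn't
    -- the explicit formula for the coefficients along the net
    have hterm : ∀ u ∈ θ.I t, π m (v s (π u (v t ξ))) =
        v (s * t) (π (n' * θ.act (sInv t) u) ξ) := by
      intro u hu
      rw [hπv t u hu ξ]
      have h2 : π m (v s (v t (π (θ.act (sInv t) u) ξ))) =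
          π m (v (s * t) (π (θ.act (sInv t) u) ξ)) :=
        ContinuousLinearMap.ext_iff.mp (hcr2 s t m hm) (π (θ.act (sInv t) u) ξ)
      rw [h2, hπv (s * t) m hm]
      congr 1
      rw [hπ_mul]; rfl
    -- n' * act (sInv t) u tends to n' along the approximate unit of I t
    have hclim : Tendsto (fun u => n' * θ.act (sInv t) u) (l t) (𝓝 n') := by
      have h1 : Tendsto (fun u : A => θ.act t n' * u) (l t) (𝓝 (θ.act t n')) :=
        (hlapp t (θ.act t n') hactn').2
      have heq2 : ∀ᶠ u in l t, n' * θ.act (sInv t) u =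
          θ.act (sInv t) (θ.act t n' * u) := by
        filter_upwards [hlev t] with u hu
        have hterm2 : θ.act (sInv t) (θ.act t n' * u) =
            θ.act (sInv t) (θ.act t n') * θ.act (sInv t) u := by
          refine θ.act_mul (sInv t) _ ?_ _ ?_
          · rw [sInv_sInv hS]; exact hactn'
          · rw [sInv_sInv hS]; exact hu.1
        rw [hterm2, act_act_sInv hS θ t hn't]
      rw [tendsto_congr' heq2]
      rw [Metric.tendsto_nhds] at h1 ⊢
      intro ε hε
      filter_upwards [hlev t, h1 ε hε] with u hu hdist
      rw [dist_eq_norm] at hdist ⊢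
      have hmem1 : θ.act t n' * u ∈ θ.I (sInv (sInv t)) := by
        rw [sInv_sInv hS]; exact θ.ideal_mul_left t _ u hu.1
      have hmem2 : θ.act t n' ∈ θ.I (sInv (sInv t)) := by
        rw [sInv_sInv hS]; exact hactn'
      calc ‖θ.act (sInv t) (θ.act t n' * u) - n'‖
          = ‖θ.act (sInv t) (θ.act t n' * u) - θ.act (sInv t) (θ.act t n')‖ := by
            rw [act_act_sInv hS θ t hn't]
        _ = ‖θ.act t n' * u - θ.act t n'‖ := act_norm_sub hS θ (sInv t) hmem1 hmem2
        _ < ε := hdist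
    have hlim2 : v (s * t) (π n' ξ) = π m (v (s * t) ξ) := (hπv (s * t) m hm ξ).symm
    refine hsep _ _ fun f => ?_
    have hchar2 : Tendsto (fun u => f (π m (v s (π u (v t ξ))))) (U t)
        (𝓝 (f (π m (v s (W t ξ))))) := hWchar t ξ (f.comp ((π m).comp (v s)))
    have hnormlim : Tendsto (fun u => f (π m (v s (π u (v t ξ))))) (U t)
        (𝓝 (f (π m (v (s * t) ξ)))) := by
      have h3 : Tendsto (fun u => π m (v s (π u (v t ξ)))) (l t)
          (𝓝 (π m (v (s * t) ξ))) := by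
        rw [← hlim2]
        have h4 : Tendsto (fun u => v (s * t) (π (n' * θ.act (sInv t) u) ξ)) (l t)
            (𝓝 (v (s * t) (π n' ξ))) :=
          ((v (s * t)).continuous.tendsto _).comp (((hπcont ξ).tendsto n').comp hclim)
        refine h4.congr' ?_
        filter_upwards [hlev t] with u hu
        exact (hterm u hu.1).symm
      exact (((f.continuous.tendsto _).comp h3).congr fun u => rfl).mono_left (hUle t)
    exact (tendsto_nhds_unique hchar2 hnormlim).symm
  -- (H7) the range condition SCR2
  have hWrange : ∀ t : S, Set.range (W t) =
      closure (↑(Submodule.span ℂ {x : E | ∃ a ∈ θ.I t, ∃ ξ : E, π a ξ = x}) : Set E) := by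
    intro t
    apply Set.Subset.antisymm
    · rintro x ⟨ξ, rfl⟩
      rw [← Submodule.topologicalClosure_coe]
      exact hWmem t ξ
    · intro x hx
      have hxM : x ∈ M t := by
        rw [← Submodule.topologicalClosure_coe] at hx
        exact hx
      have he : (t * sInv t) * (t * sInv t) = t * sInv t := idem_mul_sInv hS t
      have hx2 : x ∈ M (t * sInv t) := by rw [← hMeq t]; exact hxM
      have hfix : W t (W (sInv t) x) = x := by
        have h1 : W t (W (sInv t) x) = W (t * sInv t) x := by
          rw [hWmul t (sInv t)]; rfl
        rw [h1, hWidem _ he, hPid _ x hx2]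
      exact ⟨W (sInv t) x, hfix⟩
  -- assembly
  refine ⟨W, ⟨⟨hπ_norm, hπ_add, hπ_smul, hπ_mul, hWnorm, hWmul, hscr1, hWrange⟩,
    hcompat⟩, ?_⟩
  rintro w' ⟨hw', hw'compat⟩
  funext t
  ext ξ
  have hw'mem : w' t ξ ∈ M t := by
    have hmem : w' t ξ ∈ Set.range (w' t) := ⟨ξ, rfl⟩
    rw [hw'.scr2 t, ← Submodule.topologicalClosure_coe] at hmem
    exact hmem
  refine hUniqVec t _ _ hw'mem (hWmem t ξ) ?_
  intro u hu
  exact ContinuousLinearMap.ext_iff.mp ((hw'compat t u hu).symm.trans (hcompat t u hu)) ξ
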